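/- arXiv:1204.3502 — 2 statements merged into one kernel-verified Lean document; each statement's English description precedes it below -/
import Mathlib

section
/- For all complex z and real μ > -1, ρ ∈ ℂ, the Wright function W_{μ,ρ}(z) = Σ_{k=0}^∞ z^k / (k! · Γ(μk + ρ)) converges absolutely, i.e. the series Σ z^k/(k! Γ(μk+ρ)) is summable. -/
open Filter Set MeasureTheory Topology

lemma aux_sum_inv_sq (n : ℕ) : ∑ j ∈ Finset.range n, (1:ℝ)/(j+1)^2 ≤ 2 := by
  have h : ∀ n : ℕ, ∑ j ∈ Finset.range (n+1), (1:ℝ)/(j+1)^2 ≤ 2 - 1/((n:ℝ)+1) := by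
    intro n
    induction n with
    | zero => norm_num
    | succ n ih =>
      rw [Finset.sum_range_succ]
      have h1 : (0:ℝ) < (n:ℝ) + 1 := by positivity
      have h2 : (0:ℝ) < (n:ℝ) + 2 := by positivity
      have key : (1:ℝ)/((n:ℝ)+1+1)^2 ≤ 1/((n:ℝ)+1) - 1/((n:ℝ)+1+1) := by
        rw [div_sub_div _ _ (ne_of_gt h1) (by positivity), div_le_div_iff₀ (by positivity) (by positivity)]
        nlinarith
      push_cast
      linarith
  cases n with
  | zero => simp
  | succ m =>
    have h2 : (0:ℝ) < 1/((m:ℝ)+1) := by positivity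
    linarith [h m]

lemma aux_abs_sin_le (w : ℂ) : ‖Complex.sin w‖ ≤ Real.exp |w.im| := by
  rw [Complex.sin]
  have h1 : ‖(Complex.exp (-w * Complex.I) - Complex.exp (w * Complex.I)) * Complex.I / 2‖
      ≤ (‖Complex.exp (-w * Complex.I)‖ + ‖Complex.exp (w * Complex.I)‖) / 2 := by
    rw [norm_div, norm_mul, Complex.norm_I, mul_one, Complex.norm_two]
    gcongr
    exact norm_sub_le _ _
  refine h1.trans ?_
  rw [Complex.norm_exp, Complex.norm_exp]
  have e1 : (-w * Complex.I).re = w.im := by simp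
  have e2 : (w * Complex.I).re = -w.im := by simp
  rw [e1, e2]
  have a1 : Real.exp w.im ≤ Real.exp |w.im| := Real.exp_le_exp.2 (le_abs_self _)
  have a2 : Real.exp (-w.im) ≤ Real.exp |w.im| := Real.exp_le_exp.2 (neg_le_abs _)
  linarith

lemma aux_abs_Gamma_le {s : ℂ} (hs : 0 < s.re) :
    ‖Complex.Gamma s‖ ≤ Real.Gamma s.re := by
  rw [Complex.Gamma_eq_integral hs, Real.Gamma_eq_integral hs, Complex.GammaIntegral]
  have h1 : ‖∫ x in Ioi (0:ℝ), (Real.exp (-x) : ℂ) * (x:ℂ) ^ (s - 1)‖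
      ≤ ∫ x in Ioi (0:ℝ), ‖(Real.exp (-x) : ℂ) * (x:ℂ) ^ (s - 1)‖ :=
    norm_integral_le_integral_norm (fun x : ℝ => (Real.exp (-x) : ℂ) * (x:ℂ) ^ (s - 1))
  refine h1.trans (le_of_eq ?_)
  refine setIntegral_congr_fun measurableSet_Ioi fun x hx => ?_
  rw [mem_Ioi] at hx
  rw [norm_mul, Complex.norm_real, Real.norm_eq_abs,
    Complex.norm_cpow_eq_rpow_re_of_pos hx, abs_of_pos (Real.exp_pos _)]
  simp [Complex.sub_re]

lemma aux_Gamma_add_le {x b : ℝ} (hx : 1 ≤ x) (hb0 : 0 ≤ b) (hb1 : b ≤ 1) :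
    Real.Gamma (x + b) ≤ Real.Gamma x * x ^ b := by
  have hx0 : (0:ℝ) < x := lt_of_lt_of_le one_pos hx
  have hmem : x ∈ Ioi (0:ℝ) := hx0
  have hmem1 : x + 1 ∈ Ioi (0:ℝ) := by simp; linarith
  have hconv := Real.convexOn_log_Gamma.2 hmem hmem1 (by linarith : (0:ℝ) ≤ 1 - b) hb0 (by ring)
  simp only [Function.comp, smul_eq_mul] at hconv
  have he : (1 - b) * x + b * (x + 1) = x + b := by ring
  rw [he] at hconv
  have hg1 : 0 < Real.Gamma x := Real.Gamma_pos_of_pos hx0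
  have hg2 : Real.Gamma (x + 1) = x * Real.Gamma x := by
    rw [Real.Gamma_add_one hx0.ne']
  rw [hg2, Real.log_mul hx0.ne' hg1.ne'] at hconv
  have key : Real.log (Real.Gamma (x + b)) ≤ Real.log (Real.Gamma x * x ^ b) := by
    rw [Real.log_mul hg1.ne' (Real.rpow_pos_of_pos hx0 b).ne', Real.log_rpow hx0]
    nlinarith [hconv]
  have hgb : 0 < Real.Gamma (x + b) := Real.Gamma_pos_of_pos (by linarith)
  exact (Real.log_le_log_iff hgb (by positivity)).1 key

lemma aux_abs_Gamma_ge {s : ℂ} (hs : 1 ≤ s.re) :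
    Real.Gamma s.re * Real.exp (-(2 * s.im ^ 2)) ≤ ‖Complex.Gamma s‖ := by
  have hx0 : (0:ℝ) < s.re := lt_of_lt_of_le one_pos hs
  have hlim1 : Tendsto (fun n => ‖Complex.GammaSeq s n‖) atTop
      (𝓝 ‖Complex.Gamma s‖) :=
    (continuous_norm.tendsto _).comp (Complex.GammaSeq_tendsto_Gamma s)
  have hlim2 : Tendsto (fun n => Real.GammaSeq s.re n * Real.exp (-(2 * s.im ^ 2))) atTop
      (𝓝 (Real.Gamma s.re * Real.exp (-(2 * s.im ^ 2)))) :=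
    (Real.GammaSeq_tendsto_Gamma s.re).mul_const _
  refine le_of_tendsto_of_tendsto hlim2 hlim1 ?_
  filter_upwards [eventually_ge_atTop 1] with n hn
  have hn0 : (0:ℝ) < n := by exact_mod_cast hn
  -- compute the absolute value of the complex Gamma sequence
  have habs : ‖Complex.GammaSeq s n‖
      = (n:ℝ) ^ s.re * (n.factorial : ℝ) /
        ∏ j ∈ Finset.range (n+1), ‖s + j‖ := by
    rw [Complex.GammaSeq, norm_div, norm_mul, norm_prod]
    congr 2
    · rw [show ((n:ℂ)) = (((n:ℝ)):ℂ) by push_cast; ring,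
        Complex.norm_cpow_eq_rpow_re_of_pos hn0]
    · simp
  -- per-factor bound
  have hP : (∏ j ∈ Finset.range (n+1), ‖s + j‖)
      ≤ (∏ j ∈ Finset.range (n+1), (s.re + j)) * Real.exp (2 * s.im ^ 2) := by
    have step : ∀ j ∈ Finset.range (n+1),
        ‖s + j‖ ≤ (s.re + j) * Real.exp (s.im ^ 2 / (j+1)^2) := by
      intro j _
      have hsj : (0:ℝ) < s.re + j := by positivity
      have h1 : ‖s + j‖ = Real.sqrt ((s.re + j)^2 + s.im^2) := by
        rw [Complex.norm_def, Complex.normSq_apply]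
        congr 1
        simp
        ring
      rw [h1]
      have hrhs : (0:ℝ) ≤ (s.re + j) * Real.exp (s.im ^ 2 / (j+1)^2) := by positivity
      rw [show (s.re + j) * Real.exp (s.im ^ 2 / (j+1)^2)
          = Real.sqrt (((s.re + j) * Real.exp (s.im ^ 2 / (j+1)^2))^2) from
          (Real.sqrt_sq hrhs).symm]
      apply Real.sqrt_le_sqrt
      have hexp : 1 + 2 * (s.im ^ 2 / (j+1)^2) ≤ Real.exp (2 * (s.im ^ 2 / (j+1)^2)) :=
        Real.add_one_le_exp _ |>.trans_eq' (by ring)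
      have hsq : Real.exp (s.im ^ 2 / (j+1)^2) ^ 2 = Real.exp (2 * (s.im ^ 2 / (j+1)^2)) := by
        rw [← Real.exp_nat_mul]; ring_nf
      have hge1 : ((j:ℝ)+1)^2 ≤ (s.re + j)^2 := by
        have : (j:ℝ)+1 ≤ s.re + j := by linarith
        nlinarith [show (0:ℝ) ≤ (j:ℝ)+1 by positivity]
      have hj1 : (0:ℝ) < ((j:ℝ)+1)^2 := by positivity
      have key : s.im^2 ≤ (s.re+j)^2 * (2 * (s.im ^ 2 / (j+1)^2)) := by
        rw [mul_comm ((s.re+j)^2), mul_comm (2:ℝ), div_mul_eq_mul_div, div_mul_eq_mul_div,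
          le_div_iff₀ hj1]
        nlinarith [sq_nonneg s.im]
      calc (s.re + j)^2 + s.im^2
          ≤ (s.re + j)^2 * (1 + 2 * (s.im ^ 2 / (j+1)^2)) := by nlinarith [sq_nonneg (s.re+j)]
        _ ≤ (s.re + j)^2 * Real.exp (2 * (s.im ^ 2 / (j+1)^2)) := by
            apply mul_le_mul_of_nonneg_left hexp (by positivity)
        _ = ((s.re + j) * Real.exp (s.im ^ 2 / (j+1)^2))^2 := by rw [mul_pow, hsq]
    calc (∏ j ∈ Finset.range (n+1), ‖s + j‖)
        ≤ ∏ j ∈ Finset.range (n+1), (s.re + j) * Real.exp (s.im ^ 2 / (j+1)^2) :=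
          Finset.prod_le_prod (fun j _ => norm_nonneg _) step
      _ = (∏ j ∈ Finset.range (n+1), (s.re + j)) *
            Real.exp (∑ j ∈ Finset.range (n+1), s.im ^ 2 / (j+1)^2) := by
          rw [Finset.prod_mul_distrib, Real.exp_sum]
      _ ≤ (∏ j ∈ Finset.range (n+1), (s.re + j)) * Real.exp (2 * s.im ^ 2) := by
          apply mul_le_mul_of_nonneg_left _ (Finset.prod_nonneg fun j _ => by positivity)
          apply Real.exp_le_exp.2
          have : ∑ j ∈ Finset.range (n+1), s.im ^ 2 / (j+1)^2
              = s.im ^ 2 * ∑ j ∈ Finset.range (n+1), (1:ℝ)/(j+1)^2 := by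
            rw [Finset.mul_sum]; congr 1; ext j; ring
          rw [this]
          calc s.im ^ 2 * ∑ j ∈ Finset.range (n+1), (1:ℝ)/(j+1)^2
              ≤ s.im ^ 2 * 2 := mul_le_mul_of_nonneg_left (aux_sum_inv_sq _) (sq_nonneg _)
            _ = 2 * s.im ^ 2 := by ring
  -- positivity facts
  have hQ : (0:ℝ) < ∏ j ∈ Finset.range (n+1), (s.re + j) :=
    Finset.prod_pos fun j _ => by positivity
  have hPpos : (0:ℝ) < ∏ j ∈ Finset.range (n+1), ‖s + j‖ := by
    apply Finset.prod_pos
    intro j _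
    have : s + j ≠ 0 := by
      intro h
      have := congrArg Complex.re h
      simp at this
      linarith
    exact norm_pos_iff.mpr this
  rw [habs, Real.GammaSeq]
  rw [div_mul_eq_mul_div, div_le_div_iff₀ hQ hPpos]
  have hnum : (0:ℝ) ≤ (n:ℝ) ^ s.re * (n.factorial : ℝ) := by positivity
  calc (n:ℝ) ^ s.re * (n.factorial:ℝ) * Real.exp (-(2 * s.im ^ 2)) *
        (∏ j ∈ Finset.range (n+1), ‖s + j‖)
      ≤ (n:ℝ) ^ s.re * (n.factorial:ℝ) * Real.exp (-(2 * s.im ^ 2)) *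
        ((∏ j ∈ Finset.range (n+1), (s.re + j)) * Real.exp (2 * s.im ^ 2)) := by
        apply mul_le_mul_of_nonneg_left hP (by positivity)
    _ = (n:ℝ) ^ s.re * (n.factorial:ℝ) * (∏ j ∈ Finset.range (n+1), (s.re + j)) *
        (Real.exp (-(2 * s.im ^ 2)) * Real.exp (2 * s.im ^ 2)) := by ring
    _ = (n:ℝ) ^ s.re * (n.factorial:ℝ) * (∏ j ∈ Finset.range (n+1), (s.re + j)) := by
        rw [← Real.exp_add]; simp

lemma aux_summable_exp (z : ℂ) : Summable (fun k : ℕ => z ^ k / (k.factorial : ℂ)) := by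
  apply Summable.of_norm
  have : (fun k : ℕ => ‖z ^ k / (k.factorial : ℂ)‖) = fun k : ℕ => ‖z‖ ^ k / (k.factorial : ℝ) := by
    funext k
    rw [norm_div, norm_pow]
    norm_cast
  rw [this]
  exact Real.summable_pow_div_factorial ‖z‖

/-- absolute convergence of the Wright series. -/
theorem wright_summable (μ : ℝ) (hμ : -1 < μ) (ρ : ℂ) (z : ℂ) :
    Summable (fun k : ℕ =>
      z ^ k / ((k.factorial : ℂ) * Complex.Gamma ((μ * k : ℝ) + ρ))) := by
  have hnorm : ∀ k : ℕ, ‖z ^ k / ((k.factorial : ℂ) * Complex.Gamma ((μ * k : ℝ) + ρ))‖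
      = ‖z‖ ^ k / ((k.factorial : ℝ) * ‖Complex.Gamma ((μ * k : ℝ) + ρ)‖) := by
    intro k
    rw [norm_div, norm_mul, norm_pow,
      Complex.norm_natCast]
  have hre : ∀ k : ℕ, (((μ * k : ℝ) : ℂ) + ρ).re = μ * k + ρ.re := by intro k; simp
  have him : ∀ k : ℕ, (((μ * k : ℝ) : ℂ) + ρ).im = ρ.im := by intro k; simp
  rcases lt_trichotomy μ 0 with hneg | hz | hpos
  · -- case -1 < μ < 0
    set b : ℝ := -μ with hb_def
    have hb0 : 0 < b := by simp [hb_def]; linarith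
    have hb1 : b < 1 := by simp [hb_def]; linarith
    set c : ℝ := 1 - ρ.re with hc_def
    set C : ℝ := Real.exp (Real.pi * |ρ.im|) / Real.pi with hC_def
    have hCpos : 0 < C := by
      apply div_pos (Real.exp_pos _) Real.pi_pos
    set g : ℕ → ℝ := fun k => ‖z‖ ^ k / (k.factorial : ℝ) * (Real.Gamma (c + b * k) * C)
      with hg_def
    -- xk → ∞
    have h0 : Tendsto (fun k : ℕ => c + b * (k : ℝ)) atTop atTop := by
      apply tendsto_atTop_add_const_left
      exact (tendsto_natCast_atTop_atTop).const_mul_atTop hb0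
    have hE1 : ∀ᶠ k : ℕ in atTop, 2 ≤ c + b * (k : ℝ) := h0.eventually_ge_atTop 2
    -- ratio tendsto 0
    have hE2 : ∀ᶠ k : ℕ in atTop,
        ‖z‖ * (c + b * (k : ℝ)) ^ (-(1 - b)) * ((c + b * (k : ℝ)) / ((k : ℝ) + 1)) ≤ 1 / 2 := by
      have t2 : Tendsto (fun k : ℕ => (c + b * (k : ℝ)) ^ (-(1 - b))) atTop (𝓝 0) := by
        have := (tendsto_rpow_neg_atTop (by linarith : (0:ℝ) < 1 - b)).comp h0
        simpa [Function.comp_def] using this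
      have h4 : Tendsto (fun k : ℕ => (k : ℝ) + 1) atTop atTop :=
        tendsto_atTop_add_const_right atTop 1 tendsto_natCast_atTop_atTop
      have t3 : Tendsto (fun k : ℕ => (c + b * (k : ℝ)) / ((k : ℝ) + 1)) atTop (𝓝 b) := by
        have heq : (fun k : ℕ => (c + b * (k : ℝ)) / ((k : ℝ) + 1))
            = fun k : ℕ => b + (c - b) / ((k : ℝ) + 1) := by
          funext k
          have hk : ((k : ℝ) + 1) ≠ 0 := by positivity
          field_simp
          ring
        rw [heq]
        have : Tendsto (fun k : ℕ => (c - b) / ((k : ℝ) + 1)) atTop (𝓝 0) :=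
          Tendsto.div_atTop tendsto_const_nhds h4
        simpa using tendsto_const_nhds.add this
      have tall : Tendsto (fun k : ℕ =>
          ‖z‖ * (c + b * (k : ℝ)) ^ (-(1 - b)) * ((c + b * (k : ℝ)) / ((k : ℝ) + 1)))
          atTop (𝓝 0) := by
        have := ((tendsto_const_nhds (x := ‖z‖)).mul t2).mul t3
        simpa using this
      exact tall.eventually_le_const (by norm_num)
    -- the comparison bound
    have hbound : ∀ᶠ k : ℕ in atTop,
        ‖z ^ k / ((k.factorial : ℂ) * Complex.Gamma ((μ * k : ℝ) + ρ))‖ ≤ g k := by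
      filter_upwards [hE1] with k hk
      have hxk : (0:ℝ) < c + b * k := by linarith
      have hGxk : 0 < Real.Gamma (c + b * k) := Real.Gamma_pos_of_pos hxk
      have hgpos : 0 ≤ g k := by
        rw [hg_def]
        positivity
      rw [hnorm]
      set s : ℂ := ((μ * k : ℝ) : ℂ) + ρ with hs_def
      by_cases hG : Complex.Gamma s = 0
      · rw [hG]
        simp [hgpos]
      · -- Gamma s ≠ 0
        have hsre : s.re = 1 - (c + b * k) := by
          rw [hre]
          simp [hc_def, hb_def]
          ring
        have hsre_neg : s.re < 0 := by rw [hsre]; linarith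
        have hsin : Complex.sin (Real.pi * s) ≠ 0 := by
          intro h
          rw [Complex.sin_eq_zero_iff] at h
          obtain ⟨m, hm⟩ := h
          have hπ : ((Real.pi : ℂ)) ≠ 0 := Complex.ofReal_ne_zero.mpr Real.pi_ne_zero
          have hsm : s = (m : ℂ) := by
            have h2 : (Real.pi : ℂ) * s = (Real.pi : ℂ) * m := by rw [hm]; ring
            exact mul_left_cancel₀ hπ h2
          have hmre : (m : ℝ) < 0 := by
            have := hsre_neg
            rw [hsm] at this
            simpa using this
          have hmneg : m < 0 := by exact_mod_cast hmre
          apply hG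
          rw [Complex.Gamma_eq_zero_iff]
          refine ⟨(-m).toNat, ?_⟩
          rw [hsm]
          have : ((-m).toNat : ℤ) = -m := Int.toNat_of_nonneg (by omega)
          push_cast [this]
          ring_nf
          norm_cast
          omega
        have hrefl := Complex.Gamma_mul_Gamma_one_sub s
        have hinv : (Complex.Gamma s)⁻¹
            = Complex.sin (Real.pi * s) * Complex.Gamma (1 - s) / Real.pi := by
          have hπ : ((Real.pi : ℂ)) ≠ 0 := Complex.ofReal_ne_zero.mpr Real.pi_ne_zero
          rw [eq_div_iff hsin] at hrefl
          field_simp [hG]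
          linear_combination -hrefl
        -- bound |Gamma s|⁻¹
        have hGs_pos : 0 < ‖Complex.Gamma s‖ := by
          exact norm_pos_iff.mpr hG
        have h1sre : (1 - s).re = c + b * k := by
          simp [Complex.sub_re, hsre]
        have habs_inv : ‖Complex.Gamma s‖⁻¹ ≤ Real.Gamma (c + b * k) * C := by
          have e1 : ‖Complex.Gamma s‖⁻¹ = ‖(Complex.Gamma s)⁻¹‖ := by
            rw [norm_inv]
          rw [e1, hinv, norm_div, norm_mul]
          have hsin_le : ‖Complex.sin (Real.pi * s)‖ ≤ Real.exp (Real.pi * |ρ.im|) := by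
            have := aux_abs_sin_le (Real.pi * s)
            have him' : ((Real.pi : ℂ) * s).im = Real.pi * ρ.im := by
              rw [hs_def]
              simp
            rw [him'] at this
            rwa [abs_mul, abs_of_pos Real.pi_pos] at this
          have hGam_le : ‖Complex.Gamma (1 - s)‖ ≤ Real.Gamma (c + b * k) := by
            have := aux_abs_Gamma_le (s := 1 - s) (by rw [h1sre]; exact hxk)
            rwa [h1sre] at this
          have hπ_abs : ‖(Real.pi : ℂ)‖ = Real.pi := by
            simpa using abs_of_pos Real.pi_pos
          rw [hπ_abs, hC_def]
          rw [div_le_iff₀ Real.pi_pos] at *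
          calc ‖Complex.sin (Real.pi * s)‖ * ‖Complex.Gamma (1 - s)‖
              ≤ Real.exp (Real.pi * |ρ.im|) * Real.Gamma (c + b * k) := by
                apply mul_le_mul hsin_le hGam_le (norm_nonneg _) (Real.exp_pos _).le
            _ = Real.Gamma (c + b * k) * (Real.exp (Real.pi * |ρ.im|) / Real.pi) * Real.pi := by
                field_simp
        -- combine
        have hK : (0:ℝ) < (k.factorial : ℝ) := by positivity
        rw [hg_def]
        have : ‖z‖ ^ k / ((k.factorial : ℝ) * ‖Complex.Gamma s‖)
            = ‖z‖ ^ k / (k.factorial : ℝ) * ‖Complex.Gamma s‖⁻¹ := by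
          field_simp
        rw [this]
        apply mul_le_mul_of_nonneg_left habs_inv (by positivity)
    -- summability of g by ratio test
    have hgsum : Summable g := by
      apply summable_of_ratio_norm_eventually_le (r := 1/2) (by norm_num)
      filter_upwards [hE1, hE2] with k hk1 hk2
      set x : ℝ := c + b * k with hx_def
      have hx2 : 2 ≤ x := hk1
      have hx0 : (0:ℝ) < x := by linarith
      have hGx : 0 < Real.Gamma x := Real.Gamma_pos_of_pos hx0
      have hxsucc : c + b * ((k:ℕ) + 1 : ℕ) = x + b := by
        push_cast
        rw [hx_def]
        ring
      have hrpow : x ^ (-(1-b)) * x = x ^ b := by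
        rw [show x ^ b = x ^ ((-(1-b)) + 1) by ring_nf,
          Real.rpow_add_one hx0.ne']
      have hk1pos : (0:ℝ) < (k:ℝ) + 1 := by positivity
      have hrpow : x ^ (-(1-b)) * x = x ^ b := by
        rw [← Real.rpow_add_one hx0.ne' (-(1-b)), show (-(1-b)) + 1 = b by ring]
      have hzxb : ‖z‖ * x ^ b ≤ ((k:ℝ) + 1) / 2 := by
        have h5 : ‖z‖ * x ^ (-(1-b)) * (x / ((k:ℝ)+1)) * ((k:ℝ)+1) ≤ 1/2 * ((k:ℝ)+1) :=
          mul_le_mul_of_nonneg_right hk2 hk1pos.le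
        have h6 : ‖z‖ * x ^ (-(1-b)) * (x / ((k:ℝ)+1)) * ((k:ℝ)+1)
            = ‖z‖ * (x ^ (-(1-b)) * x) := by
          field_simp
        rw [h6, hrpow] at h5
        linarith
      have hGxb : 0 < Real.Gamma (x + b) := Real.Gamma_pos_of_pos (by linarith)
      have key1 : Real.Gamma (x + b) ≤ Real.Gamma x * x ^ b :=
        aux_Gamma_add_le (by linarith) hb0.le hb1.le
      have key3 : ‖z‖ * Real.Gamma (x + b) ≤ ((k:ℝ)+1) * (Real.Gamma x / 2) := by
        calc ‖z‖ * Real.Gamma (x + b) ≤ ‖z‖ * (Real.Gamma x * x ^ b) :=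
              mul_le_mul_of_nonneg_left key1 (norm_nonneg z)
          _ = (‖z‖ * x ^ b) * Real.Gamma x := by ring
          _ ≤ (((k:ℝ)+1)/2) * Real.Gamma x := mul_le_mul_of_nonneg_right hzxb hGx.le
          _ = ((k:ℝ)+1) * (Real.Gamma x / 2) := by ring
      have hg1pos : 0 ≤ g (k+1) := by
        rw [hg_def]
        have h7 : (0:ℝ) < Real.Gamma (c + b * ((k+1 : ℕ) : ℝ)) := by
          rw [hxsucc]
          exact hGxb
        positivity
      have hgkpos : 0 ≤ g k := by
        rw [hg_def]
        positivity
      rw [Real.norm_of_nonneg hg1pos, Real.norm_of_nonneg hgkpos, hg_def]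
      simp only
      rw [hxsucc]
      have hfac : (((k+1).factorial : ℕ) : ℝ) = ((k:ℝ)+1) * (k.factorial : ℝ) := by
        rw [Nat.factorial_succ]
        push_cast
        ring
      rw [hfac, pow_succ]
      have hKpos : (0:ℝ) < (k.factorial : ℝ) := by positivity
      have e1 : ‖z‖ ^ k * ‖z‖ / (((k:ℝ)+1) * (k.factorial : ℝ)) * (Real.Gamma (x + b) * C)
          = (‖z‖ ^ k * C / (k.factorial : ℝ)) * ((‖z‖ * Real.Gamma (x + b)) / ((k:ℝ)+1)) := by
        field_simp
      have e2 : 1/2 * (‖z‖ ^ k / (k.factorial : ℝ) * (Real.Gamma x * C))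
          = (‖z‖ ^ k * C / (k.factorial : ℝ)) * (Real.Gamma x / 2) := by
        ring
      rw [e1, e2]
      apply mul_le_mul_of_nonneg_left _ (by positivity)
      rw [div_le_iff₀ hk1pos]
      calc ‖z‖ * Real.Gamma (x + b) ≤ ((k:ℝ)+1) * (Real.Gamma x / 2) := key3
        _ = Real.Gamma x / 2 * ((k:ℝ)+1) := by ring
    exact Summable.of_norm_bounded_eventually_nat hgsum hbound
  · -- case μ = 0
    subst hz
    have heq : (fun k : ℕ => z ^ k / ((k.factorial : ℂ) * Complex.Gamma ((0 * k : ℝ) + ρ)))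
        = fun k : ℕ => z ^ k / (k.factorial : ℂ) * (Complex.Gamma ρ)⁻¹ := by
      funext k
      rw [show (((0 * k : ℝ)) : ℂ) + ρ = ρ by push_cast; ring]
      rw [div_mul_eq_div_div, div_eq_mul_inv]
    rw [heq]
    exact (aux_summable_exp z).mul_right _
  · -- case μ > 0
    have h0 : Tendsto (fun k : ℕ => μ * (k : ℝ) + ρ.re) atTop atTop :=
      tendsto_atTop_add_const_right atTop ρ.re
        ((tendsto_natCast_atTop_atTop).const_mul_atTop hpos)
    have hE : ∀ᶠ k : ℕ in atTop, 2 ≤ μ * (k : ℝ) + ρ.re := h0.eventually_ge_atTop 2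
    set g : ℕ → ℝ := fun k => ‖z‖ ^ k / (k.factorial : ℝ) * Real.exp (2 * ρ.im ^ 2)
      with hg_def
    have hgsum : Summable g :=
      (Real.summable_pow_div_factorial ‖z‖).mul_right _
    apply Summable.of_norm_bounded_eventually_nat hgsum
    filter_upwards [hE] with k hk
    rw [hnorm]
    set s : ℂ := ((μ * k : ℝ) : ℂ) + ρ with hs_def
    have hsre : s.re = μ * k + ρ.re := hre k
    have hsim : s.im = ρ.im := him k
    have hG1 : (1:ℝ) ≤ Real.Gamma s.re := by
      have h2 : (2:ℝ) ∈ Ici (2:ℝ) := self_mem_Ici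
      have hx : s.re ∈ Ici (2:ℝ) := by rw [hsre]; exact hk
      have := Real.Gamma_strictMonoOn_Ici.monotoneOn h2 hx (by rw [hsre]; exact hk)
      rwa [Real.Gamma_two] at this
    have hlow : Real.exp (-(2 * ρ.im ^ 2)) ≤ ‖Complex.Gamma s‖ := by
      have := aux_abs_Gamma_ge (s := s) (by rw [hsre]; linarith)
      rw [hsim] at this
      calc Real.exp (-(2 * ρ.im ^ 2)) = 1 * Real.exp (-(2 * ρ.im ^ 2)) := by ring
        _ ≤ Real.Gamma s.re * Real.exp (-(2 * ρ.im ^ 2)) :=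
            mul_le_mul_of_nonneg_right hG1 (Real.exp_pos _).le
        _ ≤ ‖Complex.Gamma s‖ := this
    have hKpos : (0:ℝ) < (k.factorial : ℝ) := by positivity
    have hEpos : (0:ℝ) < Real.exp (-(2 * ρ.im ^ 2)) := Real.exp_pos _
    calc ‖z‖ ^ k / ((k.factorial : ℝ) * ‖Complex.Gamma s‖)
        ≤ ‖z‖ ^ k / ((k.factorial : ℝ) * Real.exp (-(2 * ρ.im ^ 2))) := by
          apply div_le_div_of_nonneg_left (by positivity) (by positivity)
          exact mul_le_mul_of_nonneg_left hlow hKpos.le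
      _ = ‖z‖ ^ k / (k.factorial : ℝ) * Real.exp (2 * ρ.im ^ 2) := by
          rw [show -(2 * ρ.im ^ 2) = -(2 * ρ.im ^ 2) from rfl, Real.exp_neg]
          field_simp
      _ = g k := rfl
end

section
/- For β ∈ (0,1), x ≥ 0, t > 0, the function u(x,t) = (sin βπ/π) · x^{β-1} t^β / (x^{2β} + 2 x^β t^β cos βπ + t^{2β}) is a probability density in x on (0,∞) for each fixed t > 0: u ≥ 0 and ∫_0^∞ u(x,t) dx = 1. -/
open MeasureTheory

lemma lamperti_aux_integral (a s : ℝ) (hs : 0 < s) :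
    ∫ v in Set.Ioi (0:ℝ), ((v + a)^2 + s^2)⁻¹
      = (Real.pi/2 - Real.arctan (a/s)) / s := by
  have hderiv : ∀ v : ℝ, HasDerivAt (fun v : ℝ => (1/s) * Real.arctan ((v+a)/s))
      (((v + a)^2 + s^2)⁻¹) v := by
    intro v
    have h1 : HasDerivAt (fun v : ℝ => (v+a)/s) (1/s) v :=
      ((hasDerivAt_id v).add_const a).div_const s
    have h2 := (Real.hasDerivAt_arctan ((v+a)/s)).comp v h1
    have h3 := h2.const_mul (1/s)
    refine h3.congr_deriv ?_
    have hs' : s ≠ 0 := hs.ne'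
    field_simp
    ring
  have htend : Filter.Tendsto (fun v : ℝ => (1/s) * Real.arctan ((v+a)/s))
      Filter.atTop (nhds ((1/s) * (Real.pi/2))) := by
    have h1 : Filter.Tendsto (fun v : ℝ => (v+a)/s) Filter.atTop Filter.atTop :=
      (Filter.tendsto_atTop_add_const_right _ a Filter.tendsto_id).atTop_div_const hs
    exact ((Real.tendsto_arctan_atTop.mono_right nhdsWithin_le_nhds).comp h1).const_mul _
  have := integral_Ioi_of_hasDerivAt_of_nonneg'
    (a := (0:ℝ))
    (g := fun v : ℝ => (1/s) * Real.arctan ((v+a)/s))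
    (g' := fun v => ((v + a)^2 + s^2)⁻¹)
    (fun v _ => hderiv v)
    (fun v _ => by positivity) htend
  rw [this]
  simp only [zero_add]
  field_simp

/-- the Lamperti law is a probability density. -/
theorem lamperti_density_prob (β t : ℝ) (hβ : 0 < β) (hβ1 : β < 1) (ht : 0 < t) :
    (∀ x : ℝ, 0 ≤ x →
      0 ≤ (Real.sin (β * Real.pi) / Real.pi) *
        (x ^ (β - 1) * t ^ β / (x ^ (2 * β) + 2 * x ^ β * t ^ β * Real.cos (β * Real.pi) + t ^ (2 * β)))) ∧
    (∫ x in Set.Ioi (0:ℝ),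
      (Real.sin (β * Real.pi) / Real.pi) *
        (x ^ (β - 1) * t ^ β / (x ^ (2 * β) + 2 * x ^ β * t ^ β * Real.cos (β * Real.pi) + t ^ (2 * β)))) = 1 := by
  have hθ1 : 0 < β * Real.pi := by positivity
  have hθ2 : β * Real.pi < Real.pi := by
    nlinarith [Real.pi_pos]
  have hs : 0 < Real.sin (β * Real.pi) := Real.sin_pos_of_pos_of_lt_pi hθ1 hθ2
  set s := Real.sin (β * Real.pi) with hsdef
  set c := Real.cos (β * Real.pi) with hcdef
  have hc2 : c^2 + s^2 = 1 := by
    rw [hsdef, hcdef]; exact Real.cos_sq_add_sin_sq _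
  have hc1 : -1 ≤ c := Real.neg_one_le_cos _
  have hT : 0 < t ^ β := Real.rpow_pos_of_pos ht β
  set T := t ^ β with hTdef
  -- key: rewrite denominator
  have hden : ∀ x : ℝ, 0 ≤ x →
      x ^ (2*β) + 2 * x ^ β * T * c + t ^ (2*β)
        = (x ^ β + T * c)^2 + (T * s)^2 := by
    intro x hx
    have h1 : x ^ (2*β) = (x ^ β)^2 := by
      rw [mul_comm 2 β, Real.rpow_mul hx, Real.rpow_two]
    have h2 : t ^ (2*β) = T^2 := by
      rw [mul_comm 2 β, Real.rpow_mul ht.le, Real.rpow_two]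
    rw [h1, h2]
    nlinarith [hc2]
  constructor
  · intro x hx
    have hdnn : 0 ≤ x ^ (2*β) + 2 * x ^ β * T * c + t ^ (2*β) := by
      rw [hden x hx]; positivity
    have hsnn : 0 ≤ s / Real.pi := by positivity
    refine mul_nonneg hsnn (div_nonneg ?_ hdnn)
    exact mul_nonneg (Real.rpow_nonneg hx _) hT.le
  · have hcongr : ∀ x ∈ Set.Ioi (0:ℝ),
        (s / Real.pi) * (x ^ (β - 1) * T /
            (x ^ (2*β) + 2 * x ^ β * T * c + t ^ (2*β)))
          = (s * T / (Real.pi * β)) •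
              ((|β| * x ^ (β - 1)) • (((x ^ β + T * c)^2 + (T * s)^2)⁻¹)) := by
      intro x hx
      rw [hden x (le_of_lt hx)]
      rw [abs_of_pos hβ]
      have hπ : (0:ℝ) < Real.pi := Real.pi_pos
      rw [smul_eq_mul, smul_eq_mul]
      field_simp
    rw [setIntegral_congr_fun measurableSet_Ioi hcongr, integral_smul,
      integral_comp_rpow_Ioi (fun y => ((y + T * c)^2 + (T * s)^2)⁻¹) hβ.ne',
      lamperti_aux_integral (T * c) (T * s) (by positivity)]
    have harc : Real.arctan (T * c / (T * s)) = Real.pi/2 - β * Real.pi := by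
      have h1 : T * c / (T * s) = Real.tan (Real.pi/2 - β * Real.pi) := by
        rw [Real.tan_pi_div_two_sub, Real.tan_eq_sin_div_cos, ← hsdef, ← hcdef]
        rw [mul_div_mul_left _ _ hT.ne']
        rw [inv_div]
      rw [h1, Real.arctan_tan (by linarith) (by linarith)]
    rw [harc]
    have hπ : (0:ℝ) < Real.pi := Real.pi_pos
    rw [smul_eq_mul]
    field_simp
    ring
end
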